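/- For every δ > 0 and t > 0, ∫_0^t s^{-1/2} (log(s+δ) - log(s)) ds ≤ 4√δ · arctan(√(t/δ)) + 2√t · log(1 + δ/t). -/

import Mathlib

open Real MeasureTheory intervalIntegral

private lemma stmt_8_log_one_add_le (x : ℝ) (hx : 0 ≤ x) :
    Real.log (1 + x) ≤ 4 * x ^ ((1:ℝ)/4) := by
  set y := x ^ ((1:ℝ)/4) with hy
  have hy0 : 0 ≤ y := Real.rpow_nonneg hx _
  have hyx : y ^ (4:ℕ) = x := by
    rw [hy, ← Real.rpow_natCast (x ^ ((1:ℝ)/4)) 4, ← Real.rpow_mul hx]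
    norm_num
  have h1 : (1 + x) ^ ((1:ℝ)/4) ≤ 1 + y := by
    have h2 : 1 + x ≤ (1 + y) ^ (4:ℕ) := by
      nlinarith [sq_nonneg y, sq_nonneg (y - 1), pow_nonneg hy0 3]
    calc (1 + x) ^ ((1:ℝ)/4) ≤ ((1 + y) ^ (4:ℕ)) ^ ((1:ℝ)/4) :=
          Real.rpow_le_rpow (by linarith) h2 (by norm_num)
      _ = 1 + y := by
          rw [← Real.rpow_natCast (1 + y) 4, ← Real.rpow_mul (by linarith)]
          norm_num
  have h3 : Real.log ((1 + x) ^ ((1:ℝ)/4)) ≤ (1 + x) ^ ((1:ℝ)/4) - 1 :=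
    Real.log_le_sub_one_of_pos (Real.rpow_pos_of_pos (by linarith) _)
  rw [Real.log_rpow (by linarith)] at h3
  linarith

private lemma stmt_8_integrable (t δ : ℝ) (ht : 0 < t) (hδ : 0 < δ) :
    IntervalIntegrable (fun s => s ^ (-(1:ℝ)/2) * (Real.log (s + δ) - Real.log s))
      volume 0 t := by
  have hg : IntervalIntegrable (fun s : ℝ => 4 * δ ^ ((1:ℝ)/4) * s ^ (-(3:ℝ)/4))
      volume 0 t := (intervalIntegrable_rpow' (by norm_num)).const_mul _
  refine hg.mono_fun ?_ ?_
  · rw [Set.uIoc_of_le ht.le]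
    apply ContinuousOn.aestronglyMeasurable _ measurableSet_Ioc
    intro s hs
    have hs0 : 0 < s := hs.1
    apply ContinuousAt.continuousWithinAt
    exact (Real.continuousAt_rpow_const s _ (Or.inl hs0.ne')).mul
      (((continuousAt_id.add continuousAt_const).log (by show s + δ ≠ 0; positivity)).sub
        (Real.continuousAt_log hs0.ne'))
  · rw [Filter.EventuallyLE, ae_restrict_iff' measurableSet_uIoc]
    filter_upwards with s hs
    rw [Set.uIoc_of_le ht.le] at hs
    have hs0 : 0 < s := hs.1
    have hlog : Real.log s ≤ Real.log (s + δ) := Real.log_le_log hs0 (by linarith)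
    have hf0 : 0 ≤ s ^ (-(1:ℝ)/2) * (Real.log (s + δ) - Real.log s) := by
      have := Real.rpow_pos_of_pos hs0 (-(1:ℝ)/2)
      nlinarith
    have hkey : Real.log (s + δ) - Real.log s ≤ 4 * (δ / s) ^ ((1:ℝ)/4) := by
      have h1 : Real.log (s + δ) - Real.log s = Real.log (1 + δ / s) := by
        rw [← Real.log_div (by positivity) hs0.ne']
        congr 1
        field_simp
      rw [h1]
      exact stmt_8_log_one_add_le _ (by positivity)
    rw [Real.norm_of_nonneg hf0, Real.norm_of_nonneg (by positivity)]
    calc s ^ (-(1:ℝ)/2) * (Real.log (s + δ) - Real.log s)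
        ≤ s ^ (-(1:ℝ)/2) * (4 * (δ / s) ^ ((1:ℝ)/4)) :=
          mul_le_mul_of_nonneg_left hkey (Real.rpow_pos_of_pos hs0 _).le
      _ = 4 * δ ^ ((1:ℝ)/4) * s ^ (-(3:ℝ)/4) := by
          have e1 : (δ/s) ^ ((1:ℝ)/4) = δ ^ ((1:ℝ)/4) * s ^ (-((1:ℝ)/4)) := by
            rw [Real.div_rpow hδ.le hs0.le, Real.rpow_neg hs0.le, div_eq_mul_inv]
          have e2 : s ^ (-(1:ℝ)/2) * s ^ (-((1:ℝ)/4)) = s ^ (-(3:ℝ)/4) := by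
            rw [← Real.rpow_add hs0]; norm_num
          rw [e1, ← e2]; ring

private lemma stmt_8_deriv (t δ : ℝ) (hδ : 0 < δ) (s : ℝ) (hs : s ∈ Set.Ioo 0 t) :
    HasDerivAt (fun s => 2 * Real.sqrt s * (Real.log (s + δ) - Real.log s)
        + 4 * Real.sqrt δ * Real.arctan (Real.sqrt (s / δ)))
      (s ^ (-(1:ℝ)/2) * (Real.log (s + δ) - Real.log s)) s := by
  have hs0 : 0 < s := hs.1
  have hss : 0 < Real.sqrt s := Real.sqrt_pos.2 hs0
  have hsd : 0 < Real.sqrt δ := Real.sqrt_pos.2 hδ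
  have h1 : HasDerivAt (fun x : ℝ => 2 * Real.sqrt x) (2 * (1 / (2 * Real.sqrt s))) s :=
    (Real.hasDerivAt_sqrt hs0.ne').const_mul 2
  have h2 : HasDerivAt (fun x : ℝ => Real.log (x + δ)) (1 / (s + δ)) s := by
    have := ((hasDerivAt_id s).add_const δ).log (by positivity)
    simpa using this
  have h3 : HasDerivAt Real.log (1 / s) s := by
    simpa [one_div] using Real.hasDerivAt_log hs0.ne'
  have h4 : HasDerivAt (fun x : ℝ => Real.sqrt (x / δ))
      ((1 / δ) / (2 * Real.sqrt (s / δ))) s := by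
    have := ((hasDerivAt_id s).div_const δ).sqrt (by positivity)
    simpa using this
  have h5 : HasDerivAt (fun x : ℝ => 4 * Real.sqrt δ * Real.arctan (Real.sqrt (x / δ)))
      (4 * Real.sqrt δ * (1 / (1 + Real.sqrt (s / δ) ^ 2) *
        ((1 / δ) / (2 * Real.sqrt (s / δ))))) s :=
    (h4.arctan).const_mul _
  have h6 := (h1.mul (h2.sub h3)).add h5
  refine h6.congr_deriv ?_
  symm
  have e1 : Real.sqrt (s / δ) = Real.sqrt s / Real.sqrt δ := Real.sqrt_div hs0.le δ
  have e2 : Real.sqrt s ^ 2 = s := Real.sq_sqrt hs0.le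
  have e3 : Real.sqrt δ ^ 2 = δ := Real.sq_sqrt hδ.le
  have e4 : s ^ (-(1:ℝ)/2) = 1 / Real.sqrt s := by
    rw [Real.sqrt_eq_rpow, show (-1:ℝ)/2 = -(1/2) by norm_num,
      Real.rpow_neg hs0.le]
    exact (one_div _).symm
  have e5 : (Real.sqrt s / Real.sqrt δ) ^ 2 = s / δ := by rw [div_pow, e2, e3]
  rw [e1, e4, e5]
  field_simp
  ring_nf
  have e6 : Real.sqrt s ^ 4 = s ^ 2 := by rw [show (4:ℕ) = 2*2 from rfl, pow_mul, e2]
  simp only [Pi.sub_apply, add_comm δ s, e2, e3]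
  ring

private lemma stmt_8_cont (t δ : ℝ) (hδ : 0 < δ) :
    ContinuousOn (fun s => 2 * Real.sqrt s * (Real.log (s + δ) - Real.log s)
        + 4 * Real.sqrt δ * Real.arctan (Real.sqrt (s / δ))) (Set.Icc 0 t) := by
  have hB : Continuous fun s : ℝ => 4 * Real.sqrt δ * Real.arctan (Real.sqrt (s / δ)) := by
    continuity
  have hsl : ContinuousOn (fun s : ℝ => Real.sqrt s * Real.log s) (Set.Icc 0 t) := by
    intro s hs
    rcases eq_or_lt_of_le hs.1 with h0 | h0
    · subst h0
      unfold ContinuousWithinAt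
      have : Filter.Tendsto (fun s : ℝ => Real.sqrt s * Real.log s)
          (nhdsWithin 0 (Set.Ici 0)) (nhds 0) := by
        rw [show (Set.Ici (0:ℝ)) = {0} ∪ Set.Ioi 0 by
            ext x; simp [Set.mem_Ici, le_iff_lt_or_eq, or_comm, eq_comm]]
        rw [nhdsWithin_union, Filter.tendsto_sup, nhdsWithin_singleton]
        constructor
        · simpa using tendsto_pure_nhds (fun s : ℝ => Real.sqrt s * Real.log s) 0
        · apply (tendsto_log_mul_rpow_nhdsGT_zero (by norm_num : (0:ℝ) < 1/2)).congr'
          filter_upwards [self_mem_nhdsWithin] with x hx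
          rw [← Real.sqrt_eq_rpow, mul_comm]
      simp only [Real.sqrt_zero, Real.log_zero, mul_zero] at this ⊢
      exact this.mono_left (nhdsWithin_mono _ (fun x hx => hx.1))
    · exact ((Real.continuous_sqrt.continuousAt.mul
        (Real.continuousAt_log h0.ne')).continuousWithinAt)
  have hA1 : ContinuousOn (fun s : ℝ => 2 * Real.sqrt s * Real.log (s + δ)) (Set.Icc 0 t) := by
    apply ContinuousOn.mul
    · exact (continuous_const.mul Real.continuous_sqrt).continuousOn
    · apply ContinuousOn.log
      · fun_prop
      · intro s hs; have := hs.1; positivity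
  have hA : ContinuousOn (fun s : ℝ => 2 * Real.sqrt s * Real.log (s + δ)
      - 2 * (Real.sqrt s * Real.log s)) (Set.Icc 0 t) := hA1.sub (continuousOn_const.mul hsl)
  refine (hA.add hB.continuousOn).congr ?_
  intro s hs
  simp only [Pi.add_apply]
  ring

theorem stmt_8 (t δ : ℝ) (ht : 0 < t) (hδ : 0 < δ) :
    ∫ s in (0 : ℝ)..t, s ^ (-(1 : ℝ) / 2) * (Real.log (s + δ) - Real.log s)
      ≤ 4 * Real.sqrt δ * Real.arctan (Real.sqrt (t / δ))
        + 2 * Real.sqrt t * Real.log (1 + δ / t) := by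
  have key := integral_eq_sub_of_hasDeriv_right_of_le ht.le (stmt_8_cont t δ hδ)
    (fun x hx => (stmt_8_deriv t δ hδ x hx).hasDerivWithinAt)
    (stmt_8_integrable t δ ht hδ)
  rw [key]
  have hF0 : 2 * Real.sqrt 0 * (Real.log (0 + δ) - Real.log 0)
      + 4 * Real.sqrt δ * Real.arctan (Real.sqrt (0 / δ)) = 0 := by
    simp
  rw [hF0, sub_zero]
  have hlog : Real.log (1 + δ / t) = Real.log (t + δ) - Real.log t := by
    rw [show 1 + δ / t = (t + δ) / t by field_simp, Real.log_div (by positivity) ht.ne']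
  rw [hlog]
  ring_nf
  exact le_refl _
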